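/- Action of the annihilation operator on Q-symmetric products: for h, f_1,...,f_n ∈ L²(T), a⁻(h)(f_1 ⊛ ··· ⊛ f_n) = ∫ conj(h(s)) [Σ_{k=1}^n f_k(s) (Q(s,·)f_1) ⊛ ··· ⊛ (Q(s,·)f_{k-1}) ⊛ f_{k+1} ⊛ ··· ⊛ f_n] dσ(s). -/

import Mathlib

open MeasureTheory

/-- `Q_π(t_1,…,t_n) = ∏_{i<j, π(i)>π(j)} Q(t_i,t_j)`. -/
def Qpi {T : Type*} (Q : T → T → ℂ) {n : ℕ} (π : Equiv.Perm (Fin n)) (t : Fin n → T) : ℂ :=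
  ∏ p ∈ Finset.univ.filter (fun p : Fin n × Fin n => p.1 < p.2 ∧ π p.2 < π p.1),
    Q (t p.1) (t p.2)

/-- The `Q`-symmetrization `P_n f = (1/n!) Σ_π Q_π(t) f(t∘π⁻¹)`. -/
noncomputable def Psym {T : Type*} (Q : T → T → ℂ) {n : ℕ} (f : (Fin n → T) → ℂ) :
    (Fin n → T) → ℂ :=
  fun t => ((n.factorial : ℂ))⁻¹ * ∑ π : Equiv.Perm (Fin n), Qpi Q π t * f (t ∘ ⇑π⁻¹)

/-- The `Q`-symmetric tensor product `f_1 ⊛ ⋯ ⊛ f_n = P_n(f_1 ⊗ ⋯ ⊗ f_n)`. -/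
noncomputable def symProd {T : Type*} (Q : T → T → ℂ) {n : ℕ} (f : Fin n → T → ℂ) :
    (Fin n → T) → ℂ :=
  Psym Q (fun t => ∏ i, f i (t i))

/-- The annihilation operator on the `(n+1)`-particle space. -/
noncomputable def annihilation {T : Type*} [MeasurableSpace T] (σ : Measure T) {n : ℕ}
    (g : T → ℂ) (F : (Fin (n + 1) → T) → ℂ) : (Fin n → T) → ℂ :=
  fun t => ((n : ℂ) + 1) * ∫ s, (starRingEnd ℂ) (g s) * F (Fin.cons s t) ∂σ

namespace AnnihilationAux

/-- The permutation of `Fin (n+1)` with `π 0 = k` and `π a.succ = k.succAbove (ρ a)`. -/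
def E {n : ℕ} (k : Fin (n + 1)) (ρ : Equiv.Perm (Fin n)) : Equiv.Perm (Fin (n + 1)) :=
  (Equiv.Perm.decomposeFin.symm (0, ρ)).trans (Fin.cycleRange k).symm

@[simp] lemma E_zero {n : ℕ} (k : Fin (n + 1)) (ρ : Equiv.Perm (Fin n)) : E k ρ 0 = k := by
  simp [E]

@[simp] lemma E_succ {n : ℕ} (k : Fin (n + 1)) (ρ : Equiv.Perm (Fin n)) (a : Fin n) :
    E k ρ a.succ = k.succAbove (ρ a) := by
  simp [E, Equiv.Perm.decomposeFin_symm_apply_succ, Equiv.swap_self]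

lemma E_bijective {n : ℕ} :
    Function.Bijective (fun p : Fin (n + 1) × Equiv.Perm (Fin n) => E p.1 p.2) := by
  rw [Fintype.bijective_iff_injective_and_card]
  constructor
  · rintro ⟨k, ρ⟩ ⟨k', ρ'⟩ hE
    simp only at hE
    have hk : k = k' := by rw [← E_zero k ρ, ← E_zero k' ρ', hE]
    subst hk
    have hρ : ρ = ρ' := by
      ext a
      have h1 : E k ρ a.succ = E k ρ' a.succ := by rw [hE]
      rw [E_succ, E_succ] at h1
      exact congrArg Fin.val (Fin.succAbove_right_injective h1)
    rw [hρ]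
  · simp [Fintype.card_perm, Nat.factorial_succ]

lemma E_inv_zero {n : ℕ} (k : Fin (n + 1)) (ρ : Equiv.Perm (Fin n)) : (E k ρ)⁻¹ k = 0 := by
  rw [Equiv.Perm.inv_def]
  exact (Equiv.symm_apply_eq _).mpr (E_zero k ρ).symm

lemma E_inv_succAbove {n : ℕ} (k : Fin (n + 1)) (ρ : Equiv.Perm (Fin n)) (j : Fin n) :
    (E k ρ)⁻¹ (k.succAbove j) = (ρ⁻¹ j).succ := by
  rw [Equiv.Perm.inv_def]
  refine (Equiv.symm_apply_eq _).mpr ?_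
  rw [E_succ]
  simp [Equiv.Perm.inv_def]

lemma succAbove_lt_left_iff {n : ℕ} (k : Fin (n + 1)) (j : Fin n) :
    k.succAbove j < k ↔ j.castSucc < k := by
  rcases lt_or_ge j.castSucc k with hc | hc
  · rw [Fin.succAbove_of_castSucc_lt _ _ hc]
  · rw [Fin.succAbove_of_le_castSucc _ _ hc]
    simp only [Fin.lt_def, Fin.le_def, Fin.val_succ, Fin.coe_castSucc] at hc ⊢
    omega

lemma Qpi_eq {T : Type*} (Q : T → T → ℂ) {n : ℕ} (π : Equiv.Perm (Fin n)) (t : Fin n → T) :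
    Qpi Q π t = ∏ i : Fin n, ∏ j : Fin n,
      if i < j ∧ π j < π i then Q (t i) (t j) else 1 := by
  rw [Qpi, Finset.prod_filter, Fintype.prod_prod_type]

lemma ite_mul_eq {c : Prop} [Decidable c] (a b : ℂ) :
    (if c then a * b else b) = (if c then a else 1) * b := by
  split_ifs <;> ring

lemma key {T : Type*} {n : ℕ} (Q : T → T → ℂ) (f : Fin (n + 1) → T → ℂ) (s : T)
    (t : Fin n → T) (k : Fin (n + 1)) (ρ : Equiv.Perm (Fin n)) :
    Qpi Q (E k ρ) ((Fin.cons s t : Fin (n + 1) → T)) * ∏ i, f i ((Fin.cons s t : Fin (n + 1) → T) ((E k ρ)⁻¹ i)) =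
    f k s * (Qpi Q ρ t * ∏ j : Fin n,
      (if k.succAbove j < k then Q s (t (ρ⁻¹ j)) * f (k.succAbove j) (t (ρ⁻¹ j))
       else f (k.succAbove j) (t (ρ⁻¹ j)))) := by
  rw [Fin.prod_univ_succAbove (fun i => f i ((Fin.cons s t : Fin (n + 1) → T) ((E k ρ)⁻¹ i))) k]
  simp only [E_inv_zero, E_inv_succAbove, Fin.cons_zero, Fin.cons_succ]
  rw [Qpi_eq Q (E k ρ), Qpi_eq Q ρ]
  simp only [Fin.prod_univ_succ, E_zero, E_succ, Fin.cons_zero, Fin.cons_succ,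
    Fin.succ_pos, Fin.not_lt_zero, false_and, and_false, if_false, true_and,
    Fin.succ_lt_succ_iff, Fin.succAbove_lt_succAbove_iff, succAbove_lt_left_iff,
    one_mul, mul_one]
  simp only [ite_mul_eq, Finset.prod_mul_distrib]
  have reindex : ∏ j : Fin n, (if Fin.castSucc j < k then Q s (t (ρ⁻¹ j)) else 1) =
      ∏ j : Fin n, (if Fin.castSucc (ρ j) < k then Q s (t j) else 1) := by
    rw [← Equiv.prod_comp ρ (fun j => if Fin.castSucc j < k then Q s (t (ρ⁻¹ j)) else 1)]
    exact Finset.prod_congr rfl fun j _ => by simp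
  rw [reindex]
  ring

lemma core {T : Type*} {n : ℕ} (Q : T → T → ℂ) (f : Fin (n + 1) → T → ℂ) (s : T)
    (t : Fin n → T) :
    ((n : ℂ) + 1) * symProd Q f ((Fin.cons s t : Fin (n + 1) → T)) =
      ∑ k : Fin (n + 1), f k s *
        symProd Q (fun (i : Fin n) (x : T) =>
          if k.succAbove i < k then Q s x * f (k.succAbove i) x
          else f (k.succAbove i) x) t := by
  simp only [symProd, Psym, Function.comp_apply]
  rw [← Fintype.sum_bijective _ E_bijective
      (fun p : Fin (n + 1) × Equiv.Perm (Fin n) => Qpi Q (E p.1 p.2) ((Fin.cons s t : Fin (n + 1) → T)) *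
        ∏ i, f i ((Fin.cons s t : Fin (n + 1) → T) ((E p.1 p.2)⁻¹ i)))
      (fun π : Equiv.Perm (Fin (n + 1)) => Qpi Q π ((Fin.cons s t : Fin (n + 1) → T)) *
        ∏ i, f i ((Fin.cons s t : Fin (n + 1) → T) (π⁻¹ i)))
      (fun p => rfl)]
  rw [Fintype.sum_prod_type]
  have hstep : ∀ k : Fin (n + 1),
      ∑ ρ : Equiv.Perm (Fin n), Qpi Q (E k ρ) ((Fin.cons s t : Fin (n + 1) → T)) *
        ∏ i, f i ((Fin.cons s t : Fin (n + 1) → T) ((E k ρ)⁻¹ i)) =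
      f k s * ∑ ρ : Equiv.Perm (Fin n), Qpi Q ρ t * ∏ j : Fin n,
        (if k.succAbove j < k then Q s (t (ρ⁻¹ j)) * f (k.succAbove j) (t (ρ⁻¹ j))
         else f (k.succAbove j) (t (ρ⁻¹ j))) := by
    intro k
    rw [Finset.mul_sum]
    exact Finset.sum_congr rfl fun ρ _ => key Q f s t k ρ
  simp only [hstep]
  have hfac : ((n : ℂ) + 1) * (((n + 1).factorial : ℂ))⁻¹ = ((n.factorial : ℂ))⁻¹ := by
    have h1 : (((n + 1).factorial : ℕ) : ℂ) = ((n : ℂ) + 1) * (n.factorial : ℂ) := by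
      rw [Nat.factorial_succ]; push_cast; ring
    rw [h1, mul_inv, ← mul_assoc,
      mul_inv_cancel₀ (Nat.cast_add_one_ne_zero n), one_mul]
  rw [← mul_assoc, hfac, Finset.mul_sum]
  exact Finset.sum_congr rfl fun k _ => by ring

end AnnihilationAux

/-- the action of the annihilation operator on `Q`-symmetric products:
`a⁻(h)(f_1 ⊛ ⋯ ⊛ f_{n+1}) = ∫ conj(h(s)) Σ_k f_k(s) (Q(s,·)f_1) ⊛ ⋯ ⊛ (Q(s,·)f_{k-1})
⊛ f_{k+1} ⊛ ⋯ ⊛ f_{n+1} dσ(s)`. -/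
theorem annihilation_symProd {T : Type*} [MeasurableSpace T] (σ : Measure T)
    (Q : T → T → ℂ)
    (hherm : ∀ s t, (starRingEnd ℂ) (Q t s) = Q s t)
    (habs : ∀ s t, ‖Q s t‖ = 1)
    (n : ℕ) (f : Fin (n + 1) → T → ℂ) (h : T → ℂ) :
    annihilation σ h (symProd Q f) = fun t : Fin n → T =>
      ∫ s, (starRingEnd ℂ) (h s) *
        ∑ k : Fin (n + 1), f k s *
          symProd Q (fun (i : Fin n) (x : T) =>
            if k.succAbove i < k then Q s x * f (k.succAbove i) x
            else f (k.succAbove i) x) t ∂σ := by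
  funext t
  show ((n : ℂ) + 1) * ∫ s, (starRingEnd ℂ) (h s) * symProd Q f ((Fin.cons s t : Fin (n + 1) → T)) ∂σ = _
  rw [← integral_const_mul]
  congr 1
  funext s
  rw [mul_left_comm, AnnihilationAux.core Q f s t]
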